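/- If all three sides of a spherical triangle are smaller than a quadrant (π/2), then at least two of its angles are acute. -/
import Mathlib


open Real

/-- If two angles of a spherical triangle with sides less than a quadrant
are both non-acute, we get a contradiction. -/
lemma tusi_aux (a b c X Y : ℝ)
    (ha : 0 < a) (ha' : a < π / 2)
    (hb : 0 < b) (hb' : b < π / 2)
    (hc : 0 < c) (hc' : c < π / 2)
    (hX : π / 2 ≤ X) (hX' : X < π)
    (hY : π / 2 ≤ Y) (hY' : Y < π)
    (lawX : Real.cos a = Real.cos b * Real.cos c + Real.sin b * Real.sin c * Real.cos X)
    (lawY : Real.cos b = Real.cos a * Real.cos c + Real.sin a * Real.sin c * Real.cos Y) :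
    False := by
  have hcosX : Real.cos X ≤ 0 :=
    Real.cos_nonpos_of_pi_div_two_le_of_le hX (by linarith [Real.pi_pos])
  have hcosY : Real.cos Y ≤ 0 :=
    Real.cos_nonpos_of_pi_div_two_le_of_le hY (by linarith [Real.pi_pos])
  have hsa : 0 < Real.sin a := Real.sin_pos_of_pos_of_lt_pi ha (by linarith [Real.pi_pos])
  have hsb : 0 < Real.sin b := Real.sin_pos_of_pos_of_lt_pi hb (by linarith [Real.pi_pos])
  have hsc : 0 < Real.sin c := Real.sin_pos_of_pos_of_lt_pi hc (by linarith [Real.pi_pos])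
  have hca : 0 < Real.cos a := Real.cos_pos_of_mem_Ioo ⟨by linarith, ha'⟩
  have hcb : 0 < Real.cos b := Real.cos_pos_of_mem_Ioo ⟨by linarith, hb'⟩
  have hcc : 0 < Real.cos c := Real.cos_pos_of_mem_Ioo ⟨by linarith, hc'⟩
  have hcc1 : Real.cos c < 1 := by
    have := Real.cos_lt_cos_of_nonneg_of_le_pi (le_refl 0) (by linarith [Real.pi_pos]) hc
    simpa using this
  -- cos a ≤ cos b * cos c < cos b ; cos b ≤ cos a * cos c < cos a
  have hX0 : Real.sin b * Real.sin c * Real.cos X ≤ 0 :=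
    mul_nonpos_of_nonneg_of_nonpos (le_of_lt (mul_pos hsb hsc)) hcosX
  have hY0 : Real.sin a * Real.sin c * Real.cos Y ≤ 0 :=
    mul_nonpos_of_nonneg_of_nonpos (le_of_lt (mul_pos hsa hsc)) hcosY
  have h1 : Real.cos a < Real.cos b := by
    nlinarith [mul_pos hcb (sub_pos.mpr hcc1)]
  have h2 : Real.cos b < Real.cos a := by
    nlinarith [mul_pos hca (sub_pos.mpr hcc1)]
  linarith

/-- Al-Ṭūsī, Book V, Chapter 3, Proposition VII: if all three sides of a
spherical triangle are smaller than a quadrant, then at least two of its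
angles are acute. -/
theorem tusi_prop_VII (a b c A B C : ℝ)
    (ha : 0 < a) (ha' : a < π / 2)
    (hb : 0 < b) (hb' : b < π / 2)
    (hc : 0 < c) (hc' : c < π / 2)
    (hab : a < b + c) (hba : b < a + c) (hca : c < a + b)
    (hA : 0 < A) (hA' : A < π) (hB : 0 < B) (hB' : B < π)
    (hC : 0 < C) (hC' : C < π)
    (lawA : Real.cos a = Real.cos b * Real.cos c + Real.sin b * Real.sin c * Real.cos A)
    (lawB : Real.cos b = Real.cos a * Real.cos c + Real.sin a * Real.sin c * Real.cos B)
    (lawC : Real.cos c = Real.cos a * Real.cos b + Real.sin a * Real.sin b * Real.cos C) :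
    (A < π / 2 ∧ B < π / 2) ∨ (A < π / 2 ∧ C < π / 2) ∨ (B < π / 2 ∧ C < π / 2) := by
  by_contra h
  push_neg at h
  obtain ⟨h1, h2, h3⟩ := h
  have lawB' : Real.cos b = Real.cos c * Real.cos a + Real.sin c * Real.sin a * Real.cos B := by
    rw [lawB]; ring
  have lawC' : Real.cos c = Real.cos b * Real.cos a + Real.sin b * Real.sin a * Real.cos C := by
    rw [lawC]; ring
  have lawA' : Real.cos a = Real.cos c * Real.cos b + Real.sin c * Real.sin b * Real.cos A := by
    rw [lawA]; ring
  rcases lt_or_ge A (π / 2) with hA2 | hA2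
  · exact tusi_aux b c a B C hb hb' hc hc' ha ha' (h1 hA2) hB' (h2 hA2) hC' lawB' lawC'
  · rcases lt_or_ge B (π / 2) with hB2 | hB2
    · exact tusi_aux a c b A C ha ha' hc hc' hb hb' hA2 hA' (h3 hB2) hC' lawA' lawC
    · exact tusi_aux a b c A B ha ha' hb hb' hc hc' hA2 hA' hB2 hB' lawA lawB
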